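/- Let μ and ν be Borel probability measures on ℝ^d with finite second moments, with μ absolutely continuous with respect to the Lebesgue measure. Let G : ℝ^d → ℝ be a convex function, differentiable μ-almost everywhere, such that (∇G)_* μ = ν. Let F_n : ℝ^d → ℝ be differentiable convex functions that converge pointwise on ℝ^d (to some real-valued function) and such that the pushforwards (∇F_n)_* μ converge weakly to ν. Then ∇F_n(x) → ∇G(x) for μ-almost every x ∈ ℝ^d. -/

import Mathlib

open MeasureTheory Filter Topology Set
open scoped RealInnerProductSpace ENNReal NNReal

variable {d : ℕ}
local notation "E" => EuclideanSpace ℝ (Fin d)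

/-- slope limit along a ray -/
lemma slope_tendsto_inner {f : E → ℝ} {g x : E} (hf : HasGradientAt f g x) (v : E) :
    Tendsto (fun t : ℝ => (f (x + t • v) - f x) / t) (𝓝[>] (0:ℝ)) (𝓝 ⟪g, v⟫) := by
  have hc : HasDerivAt (fun t : ℝ => x + t • v) v 0 := by
    simpa using ((hasDerivAt_id (0:ℝ)).smul_const v).const_add x
  have hφ : HasDerivAt (fun t : ℝ => f (x + t • v)) ⟪g, v⟫ 0 := by
    have hf' : HasFDerivAt f ((InnerProductSpace.toDual ℝ E) g) (x + (0:ℝ) • v) := by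
      simpa using hf.hasFDerivAt
    have := hf'.comp_hasDerivAt (0:ℝ) hc
    simp only [zero_smul, add_zero, InnerProductSpace.toDual_apply_apply] at this
    exact this
  have h1 := hasDerivAt_iff_tendsto_slope.mp hφ
  have h2 : Tendsto (slope (fun t : ℝ => f (x + t • v)) 0) (𝓝[>] (0:ℝ)) (𝓝 ⟪g, v⟫) :=
    h1.mono_left (nhdsWithin_mono _ (fun t ht => ne_of_gt ht))
  refine h2.congr' ?_
  filter_upwards [self_mem_nhdsWithin] with t ht
  rw [slope_def_field]
  simp [div_eq_inv_mul]

/-- global subgradient inequality at a differentiability point of a convex function -/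
lemma convex_subgrad {f : E → ℝ} (hconv : ConvexOn ℝ univ f) {g x : E}
    (hf : HasGradientAt f g x) (y : E) : ⟪g, y - x⟫ ≤ f y - f x := by
  refine le_of_tendsto (slope_tendsto_inner hf (y - x)) ?_
  filter_upwards [Ioc_mem_nhdsGT_of_mem (Set.left_mem_Ico.mpr one_pos)] with t ht
  have hxt : x + t • (y - x) = (1 - t) • x + t • y := by
    rw [smul_sub, sub_smul]; module
  have hcv := hconv.2 (mem_univ x) (mem_univ y) (by linarith [ht.2] : (0:ℝ) ≤ 1 - t)
    (le_of_lt ht.1) (by ring)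
  rw [div_le_iff₀ ht.1, hxt]
  calc f ((1-t) • x + t • y) - f x ≤ ((1-t) * f x + t * f y) - f x := by
        simpa [smul_eq_mul] using sub_le_sub_right hcv (f x)
    _ = (f y - f x) * t := by ring

/-- uniqueness of subgradients at differentiability points -/
lemma subgrad_unique {f : E → ℝ} {g x p : E} (hf : HasGradientAt f g x)
    (h : ∀ y, ⟪p, y - x⟫ ≤ f y - f x) : p = g := by
  have key : ∀ v : E, ⟪p, v⟫ ≤ ⟪g, v⟫ := by
    intro v
    refine ge_of_tendsto (slope_tendsto_inner hf v) ?_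
    filter_upwards [self_mem_nhdsWithin] with t ht
    have := h (x + t • v)
    rw [add_sub_cancel_left, real_inner_smul_right] at this
    rw [le_div_iff₀ ht]
    linarith
  have hv := key (p - g)
  have h2 : ⟪p - g, p - g⟫ ≤ 0 := by
    rw [inner_sub_left]; linarith
  have := real_inner_self_nonneg (x := p - g)
  have h0 : ⟪p - g, p - g⟫ = 0 := le_antisymm h2 this
  have := inner_self_eq_zero.mp h0
  exact sub_eq_zero.mp this

/-- Rademacher for locally Lipschitz functions -/
lemma locallyLipschitz_ae_diff {f : E → ℝ} (hf : LocallyLipschitz f) :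
    ∀ᵐ x ∂(volume : Measure E), DifferentiableAt ℝ f x := by
  choose K t ht hK using hf
  have hmem : ∀ x : E, interior (t x) ∈ 𝓝 x := fun x => interior_mem_nhds.mpr (ht x)
  obtain ⟨s, hsc, hsU⟩ := TopologicalSpace.countable_cover_nhds hmem
  have hae : ∀ x₀ ∈ s, ∀ᵐ x ∂(volume : Measure E),
      x ∈ interior (t x₀) → DifferentiableAt ℝ f x := by
    intro x₀ _
    have hK' : LipschitzOnWith (K x₀) f (interior (t x₀)) := (hK x₀).mono interior_subset
    filter_upwards [hK'.ae_differentiableWithinAt_of_mem] with x hx hxmem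
    exact (hx hxmem).differentiableAt (isOpen_interior.mem_nhds hxmem)
  have := (ae_ball_iff hsc).mpr hae
  filter_upwards [this] with x hx
  have : x ∈ ⋃ x₀ ∈ s, interior (t x₀) := hsU ▸ mem_univ x
  obtain ⟨x₀, hx₀s, hxmem⟩ := mem_iUnion₂.mp this
  exact hx x₀ hx₀s hxmem

/-- convergence of gradients of convex functions at differentiability points of the limit -/
lemma grad_tendsto_of_convex {F : ℕ → E → ℝ} {f : E → ℝ}
    (hFconv : ∀ n, ConvexOn ℝ univ (F n)) (hFdiff : ∀ n, Differentiable ℝ (F n))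
    (hlim : ∀ x, Tendsto (fun n => F n x) atTop (𝓝 (f x)))
    {x : E} (hfd : DifferentiableAt ℝ f x) :
    Tendsto (fun n => gradient (F n) x) atTop (𝓝 (gradient f x)) := by
  set g : ℕ → E := fun n => gradient (F n) x with hg
  have hgrad : ∀ n, HasGradientAt (F n) (g n) x := fun n => (hFdiff n x).hasGradientAt
  -- coordinatewise bound
  have hcoord : ∀ i : Fin d, ∃ C : ℝ, ∀ n, |(g n) i| ≤ C := by
    intro i
    set v : E := EuclideanSpace.single i (1:ℝ) with hv
    obtain ⟨A, hA⟩ : ∃ A, ∀ n, F n (x + v) - F n x ≤ A := by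
      obtain ⟨C, hC⟩ := ((hlim (x + v)).sub (hlim x)).bddAbove_range
      exact ⟨C, fun n => hC (mem_range_self n)⟩
    obtain ⟨B, hB⟩ : ∃ B, ∀ n, F n (x - v) - F n x ≤ B := by
      obtain ⟨C, hC⟩ := ((hlim (x - v)).sub (hlim x)).bddAbove_range
      exact ⟨C, fun n => hC (mem_range_self n)⟩
    refine ⟨max A B, fun n => abs_le.mpr ⟨?_, ?_⟩⟩
    · have h1 : ⟪g n, (x - v) - x⟫ ≤ F n (x - v) - F n x :=
        convex_subgrad (hFconv n) (hgrad n) (x - v)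
      have h2 : ⟪g n, (x - v) - x⟫ = -((g n) i) := by
        have : (x - v) - x = -v := by abel
        rw [this, inner_neg_right, hv]
        simp [EuclideanSpace.inner_single_right]
      rw [h2] at h1
      have := le_trans h1 (le_trans (hB n) (le_max_right A B))
      linarith
    · have h1 : ⟪g n, (x + v) - x⟫ ≤ F n (x + v) - F n x :=
        convex_subgrad (hFconv n) (hgrad n) (x + v)
      have h2 : ⟪g n, (x + v) - x⟫ = (g n) i := by
        have : (x + v) - x = v := by abel
        rw [this, hv]
        simp [EuclideanSpace.inner_single_right]
      rw [h2] at h1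
      exact le_trans h1 (le_trans (hA n) (le_max_left A B))
  choose C hC using hcoord
  set R : ℝ := Real.sqrt (∑ i, (C i)^2) with hR
  have hbound : ∀ n, g n ∈ Metric.closedBall (0 : E) R := by
    intro n
    rw [Metric.mem_closedBall, dist_zero_right]
    have h1 : ‖g n‖ = Real.sqrt (∑ i, ((g n) i)^2) := by
      rw [EuclideanSpace.norm_eq]
      congr 1
      exact Finset.sum_congr rfl (fun i _ => by rw [Real.norm_eq_abs, sq_abs])
    rw [h1, hR]
    apply Real.sqrt_le_sqrt
    apply Finset.sum_le_sum
    intro i _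
    have := hC i n
    nlinarith [abs_nonneg ((g n) i), sq_abs ((g n) i)]
  -- subsequence argument
  apply tendsto_of_subseq_tendsto
  intro ns hns
  obtain ⟨a, _, φ, hφ, ha⟩ := tendsto_subseq_of_bounded Metric.isBounded_closedBall
    (fun k => hbound (ns k))
  refine ⟨φ, ?_⟩
  have haeq : a = gradient f x := by
    apply subgrad_unique hfd.hasGradientAt
    intro y
    have hterm : ∀ k, ⟪g (ns (φ k)), y - x⟫ ≤ F (ns (φ k)) y - F (ns (φ k)) x := fun k =>
      convex_subgrad (hFconv _) (hgrad _) y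
    have hL : Tendsto (fun k => ⟪g (ns (φ k)), y - x⟫) atTop (𝓝 ⟪a, y - x⟫) :=
      ha.inner tendsto_const_nhds
    have hRt : Tendsto (fun k => F (ns (φ k)) y - F (ns (φ k)) x) atTop (𝓝 (f y - f x)) := by
      have hsub : Tendsto (fun k => ns (φ k)) atTop atTop := hns.comp hφ.tendsto_atTop
      exact ((hlim y).comp hsub).sub ((hlim x).comp hsub)
    exact le_of_tendsto_of_tendsto' hL hRt hterm
  rw [← haeq]
  exact ha

lemma measurable_gradient (f : E → ℝ) : Measurable (fun x => gradient f x) := by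
  have h1 : Measurable (fderiv ℝ f) := measurable_fderiv ℝ f
  have h2 : Continuous (InnerProductSpace.toDual ℝ (EuclideanSpace ℝ (Fin d))).symm :=
    (InnerProductSpace.toDual ℝ (EuclideanSpace ℝ (Fin d))).symm.continuous
  exact h2.measurable.comp h1

private lemma ofReal_max_zero (a : ℝ) : ENNReal.ofReal (max a 0) = ENNReal.ofReal a := by
  rcases le_total a 0 with h | h
  · rw [max_eq_right h, ENNReal.ofReal_of_nonpos h, ENNReal.ofReal_zero]
  · rw [max_eq_left h]

private lemma inner_diff (p a b : E) : ⟪p, a - b⟫ = ⟪a, p⟫ - ⟪b, p⟫ := by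
  rw [inner_sub_right, real_inner_comm p a, real_inner_comm p b]

private lemma integrable_inner_comp {μ : Measure (EuclideanSpace ℝ (Fin d))}
    [IsProbabilityMeasure μ] {T S : E → E}
    (hT : Measurable T) (hS : Measurable S)
    (hT2 : Integrable (fun x => ‖T x‖ ^ 2) μ) (hS2 : Integrable (fun x => ‖S x‖ ^ 2) μ) :
    Integrable (fun x => ⟪T x, S x⟫) μ := by
  refine Integrable.mono' (hT2.add hS2) (hT.inner hS).aestronglyMeasurable ?_
  filter_upwards with x
  have h := abs_real_inner_le_norm (T x) (S x)
  rw [Real.norm_eq_abs]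
  simp only [Pi.add_apply]
  nlinarith [sq_nonneg (‖T x‖ - ‖S x‖), sq_nonneg (‖T x‖ + ‖S x‖)]

lemma main_transport {μ ν : Measure E} [IsProbabilityMeasure μ] [IsProbabilityMeasure ν]
    (hμ2 : Integrable (fun x : EuclideanSpace ℝ (Fin d) => ‖x‖ ^ 2) μ)
    (hν2 : Integrable (fun y : EuclideanSpace ℝ (Fin d) => ‖y‖ ^ 2) ν)
    (Φ Ψ : E → ℝ) (hΦconv : ConvexOn ℝ univ Φ)
    (hΦdiff : ∀ᵐ x ∂μ, DifferentiableAt ℝ Φ x)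
    (hΦpush : μ.map (fun x => gradient Φ x) = ν)
    (hΨpush : μ.map (fun x => gradient Ψ x) = ν) :
    (∫ x, ⟪x, gradient Ψ x⟫ ∂μ ≤ ∫ x, ⟪x, gradient Φ x⟫ ∂μ) ∧
    ((∫ x, ⟪x, gradient Φ x⟫ ∂μ ≤ ∫ x, ⟪x, gradient Ψ x⟫ ∂μ) →
      ∀ᵐ x ∂μ, ∀ y, Φ x + ⟪gradient Ψ x, y - x⟫ ≤ Φ y) := by
  haveI : (ae μ).NeBot := MeasureTheory.ae_neBot.2 (IsProbabilityMeasure.ne_zero μ)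
  have hΦcont : Continuous Φ := hΦconv.locallyLipschitz.continuous
  obtain ⟨x₀, hx₀⟩ := hΦdiff.exists
  set g₀ : E := gradient Φ x₀ with hg₀def
  have hg₀ : HasGradientAt Φ g₀ x₀ := hx₀.hasGradientAt
  set A : E → ℝ := fun y => ⟪x₀, y⟫ - Φ x₀ with hA
  have hAcont : Continuous A := (continuous_const.inner continuous_id).sub continuous_const
  set u : ℕ → E := TopologicalSpace.denseSeq (EuclideanSpace ℝ (Fin d)) with hu_def
  have hu : DenseRange u := TopologicalSpace.denseRange_denseSeq _
  set ψ : E → ℝ≥0∞ := fun y => ⨆ k, ENNReal.ofReal (⟪u k, y⟫ - Φ (u k) - A y) with hψdef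
  have hψmeas : Measurable ψ := by
    apply Measurable.iSup
    intro k
    apply ENNReal.measurable_ofReal.comp
    exact (((continuous_const.inner continuous_id).sub continuous_const).sub hAcont).measurable
  have hψ_ge : ∀ z y : E, ENNReal.ofReal (⟪z, y⟫ - Φ z - A y) ≤ ψ y := by
    intro z y
    obtain ⟨w, hw_mem, hw_lim⟩ := mem_closure_iff_seq_limit.mp (hu z)
    have hterm : ∀ j, ENNReal.ofReal (⟪w j, y⟫ - Φ (w j) - A y) ≤ ψ y := by
      intro j
      obtain ⟨k, hk⟩ := hw_mem j
      rw [hψdef, ← hk]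
      exact le_iSup (fun k => ENNReal.ofReal (⟪u k, y⟫ - Φ (u k) - A y)) k
    have hcont : Tendsto (fun j => ENNReal.ofReal (⟪w j, y⟫ - Φ (w j) - A y)) atTop
        (𝓝 (ENNReal.ofReal (⟪z, y⟫ - Φ z - A y))) := by
      apply (ENNReal.continuous_ofReal.tendsto _).comp
      exact ((hw_lim.inner tendsto_const_nhds).sub ((hΦcont.tendsto z).comp hw_lim)).sub
        tendsto_const_nhds
    exact le_of_tendsto hcont (Eventually.of_forall hterm)
  have hψ_eq : ∀ z : E, DifferentiableAt ℝ Φ z →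
      ψ (gradient Φ z) = ENNReal.ofReal (⟪z, gradient Φ z⟫ - Φ z - A (gradient Φ z)) := by
    intro z hz
    refine le_antisymm (iSup_le fun k => ?_) (hψ_ge z (gradient Φ z))
    apply ENNReal.ofReal_le_ofReal
    have hsub := convex_subgrad hΦconv hz.hasGradientAt (u k)
    have hinner : ⟪gradient Φ z, u k - z⟫ = ⟪u k, gradient Φ z⟫ - ⟪z, gradient Φ z⟫ :=
      inner_diff _ _ _
    linarith [hsub, hinner.symm.le]
  -- measurability of gradient maps
  have mΦ : Measurable (fun x => gradient Φ x) := measurable_gradient Φ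
  have mΨ : Measurable (fun x => gradient Ψ x) := measurable_gradient Ψ
  -- second moments of the gradients
  have hΦ2 : Integrable (fun x => ‖gradient Φ x‖ ^ 2) μ := by
    have h := hν2; rw [← hΦpush] at h
    exact (integrable_map_measure (continuous_norm.pow 2).aestronglyMeasurable
      mΦ.aemeasurable).mp h
  have hΨ2 : Integrable (fun x => ‖gradient Ψ x‖ ^ 2) μ := by
    have h := hν2; rw [← hΨpush] at h
    exact (integrable_map_measure (continuous_norm.pow 2).aestronglyMeasurable
      mΨ.aemeasurable).mp h
  have hconst2 : Integrable (fun _ : E => ‖x₀‖ ^ 2) μ := integrable_const _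
  -- integrability of the inner products
  have hinnerΦ : Integrable (fun x => ⟪x, gradient Φ x⟫) μ :=
    integrable_inner_comp measurable_id mΦ (by simpa using hμ2) hΦ2
  have hinnerΨ : Integrable (fun x => ⟪x, gradient Ψ x⟫) μ :=
    integrable_inner_comp measurable_id mΨ (by simpa using hμ2) hΨ2
  have hAΦint : Integrable (fun z => A (gradient Φ z)) μ := by
    simp only [hA]
    exact (integrable_inner_comp measurable_const mΦ hconst2 hΦ2).sub (integrable_const _)
  have hAΨint : Integrable (fun z => A (gradient Ψ z)) μ := by
    simp only [hA]
    exact (integrable_inner_comp measurable_const mΨ hconst2 hΨ2).sub (integrable_const _)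
  -- integrability of Φ
  have hxnorm : Integrable (fun x : E => ‖x‖) μ := by
    refine Integrable.mono' ((integrable_const 1).add hμ2)
      continuous_norm.aestronglyMeasurable ?_
    filter_upwards with x
    rw [Real.norm_eq_abs, abs_of_nonneg (norm_nonneg _)]
    simp only [Pi.add_apply]
    nlinarith [sq_nonneg (‖x‖ - 1)]
  have hgradnormΦ : Integrable (fun x => ‖gradient Φ x‖) μ := by
    refine Integrable.mono' ((integrable_const 1).add hΦ2)
      mΦ.norm.aestronglyMeasurable ?_
    filter_upwards with x
    rw [Real.norm_eq_abs, abs_of_nonneg (norm_nonneg _)]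
    simp only [Pi.add_apply]
    nlinarith [sq_nonneg (‖gradient Φ x‖ - 1)]
  have hmixΦ : Integrable (fun x => ‖gradient Φ x‖ * ‖x‖) μ := by
    refine Integrable.mono' (hΦ2.add hμ2) (mΦ.norm.mul measurable_norm).aestronglyMeasurable ?_
    filter_upwards with x
    rw [Real.norm_eq_abs, abs_of_nonneg (mul_nonneg (norm_nonneg _) (norm_nonneg _))]
    simp only [Pi.add_apply]
    nlinarith [sq_nonneg (‖gradient Φ x‖ - ‖x‖)]
  have hΦint : Integrable Φ μ := by
    have b1 : Integrable (fun x : E => ‖g₀‖ * ‖x‖ + ‖g₀‖ * ‖x₀‖) μ :=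
      (hxnorm.const_mul _).add (integrable_const _)
    have b2 : Integrable (fun x : E => ‖x₀‖ * ‖gradient Φ x‖ + ‖gradient Φ x‖ * ‖x‖) μ :=
      (hgradnormΦ.const_mul _).add hmixΦ
    have b3 : Integrable (fun x : E => |Φ x₀| + (‖g₀‖ * ‖x‖ + ‖g₀‖ * ‖x₀‖)) μ :=
      (integrable_const _).add b1
    have hBint : Integrable (fun x : E => |Φ x₀| + (‖g₀‖ * ‖x‖ + ‖g₀‖ * ‖x₀‖)
        + (‖x₀‖ * ‖gradient Φ x‖ + ‖gradient Φ x‖ * ‖x‖)) μ := b3.add b2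
    refine Integrable.mono' hBint hΦcont.aestronglyMeasurable ?_
    filter_upwards [hΦdiff] with x hx
    rw [Real.norm_eq_abs, abs_le]
    have hlow := convex_subgrad hΦconv hg₀ x
    have hup := convex_subgrad hΦconv hx.hasGradientAt x₀
    have h1 : |⟪g₀, x - x₀⟫| ≤ ‖g₀‖ * ‖x - x₀‖ := abs_real_inner_le_norm _ _
    have h2 : ‖g₀‖ * ‖x - x₀‖ ≤ ‖g₀‖ * (‖x‖ + ‖x₀‖) :=
      mul_le_mul_of_nonneg_left (norm_sub_le _ _) (norm_nonneg _)
    have h3 : |⟪gradient Φ x, x₀ - x⟫| ≤ ‖gradient Φ x‖ * ‖x₀ - x‖ := abs_real_inner_le_norm _ _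
    have h4 : ‖gradient Φ x‖ * ‖x₀ - x‖ ≤ ‖gradient Φ x‖ * (‖x₀‖ + ‖x‖) :=
      mul_le_mul_of_nonneg_left (norm_sub_le _ _) (norm_nonneg _)
    have h5 := abs_le.mp h1
    have h6 := abs_le.mp h3
    constructor
    · nlinarith [neg_abs_le (Φ x₀), le_abs_self (Φ x₀)]
    · nlinarith [neg_abs_le (Φ x₀), le_abs_self (Φ x₀)]
  -- the functions rΦ and rΨ
  set rΦ : E → ℝ := fun z => ⟪z, gradient Φ z⟫ - Φ z - A (gradient Φ z) with hrΦdef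
  set rΨ : E → ℝ := fun x => ⟪x, gradient Ψ x⟫ - Φ x - A (gradient Ψ x) with hrΨdef
  have hrΦint : Integrable rΦ μ := by
    have hs : Integrable (fun z : E => ⟪z, gradient Φ z⟫ - Φ z) μ := hinnerΦ.sub hΦint
    exact hs.sub hAΦint
  have hrΨint : Integrable rΨ μ := by
    have hs : Integrable (fun x : E => ⟪x, gradient Ψ x⟫ - Φ x) μ := hinnerΨ.sub hΦint
    exact hs.sub hAΨint
  have hrΦ0 : 0 ≤ᵐ[μ] rΦ := by
    filter_upwards [hΦdiff] with z hz
    have hs := convex_subgrad hΦconv hz.hasGradientAt x₀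
    have hi : ⟪gradient Φ z, x₀ - z⟫ = ⟪x₀, gradient Φ z⟫ - ⟪z, gradient Φ z⟫ := inner_diff _ _ _
    simp only [hrΦdef, hA, Pi.zero_apply]
    linarith
  -- the lintegral chain
  have step1 : ∫⁻ x, ψ (gradient Ψ x) ∂μ = ∫⁻ y, ψ y ∂ν := by
    rw [← hΨpush, lintegral_map hψmeas mΨ]
  have step2 : ∫⁻ z, ψ (gradient Φ z) ∂μ = ∫⁻ y, ψ y ∂ν := by
    rw [← hΦpush, lintegral_map hψmeas mΦ]
  have step3 : ∫⁻ z, ψ (gradient Φ z) ∂μ = ENNReal.ofReal (∫ z, rΦ z ∂μ) := by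
    rw [ofReal_integral_eq_lintegral_ofReal hrΦint hrΦ0]
    apply lintegral_congr_ae
    filter_upwards [hΦdiff] with z hz
    exact hψ_eq z hz
  have hIint : ∫⁻ x, ψ (gradient Ψ x) ∂μ = ENNReal.ofReal (∫ z, rΦ z ∂μ) :=
    step1.trans (step2.symm.trans step3)
  have hpt : ∀ x, ENNReal.ofReal (rΨ x) ≤ ψ (gradient Ψ x) := fun x => hψ_ge x _
  have step5 : ∫⁻ x, ENNReal.ofReal (rΨ x) ∂μ ≤ ENNReal.ofReal (∫ z, rΦ z ∂μ) :=
    hIint ▸ lintegral_mono hpt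
  have hmax : ∫⁻ x, ENNReal.ofReal (rΨ x) ∂μ = ENNReal.ofReal (∫ x, max (rΨ x) 0 ∂μ) := by
    rw [ofReal_integral_eq_lintegral_ofReal hrΨint.pos_part
      (ae_of_all _ fun x => le_max_right _ _)]
    exact lintegral_congr fun x => (ofReal_max_zero (rΨ x)).symm
  have hintmax_ge : ∫ x, rΨ x ∂μ ≤ ∫ x, max (rΨ x) 0 ∂μ :=
    integral_mono hrΨint hrΨint.pos_part (fun x => le_max_left _ _)
  have step6 : ENNReal.ofReal (∫ x, rΨ x ∂μ) ≤ ∫⁻ x, ENNReal.ofReal (rΨ x) ∂μ := by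
    rw [hmax]; exact ENNReal.ofReal_le_ofReal hintmax_ge
  have hrΦnonneg : 0 ≤ ∫ z, rΦ z ∂μ := integral_nonneg_of_ae hrΦ0
  have hineq_r : ∫ x, rΨ x ∂μ ≤ ∫ z, rΦ z ∂μ :=
    (ENNReal.ofReal_le_ofReal_iff hrΦnonneg).mp (step6.trans step5)
  -- expansions of the integrals
  have hexpΨ : ∫ x, rΨ x ∂μ
      = ∫ x, ⟪x, gradient Ψ x⟫ ∂μ - ∫ x, Φ x ∂μ - ∫ x, A (gradient Ψ x) ∂μ := by
    have hs1 : Integrable (fun x : E => ⟪x, gradient Ψ x⟫ - Φ x) μ := hinnerΨ.sub hΦint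
    rw [hrΨdef]
    rw [integral_sub hs1 hAΨint, integral_sub hinnerΨ hΦint]
  have hexpΦ : ∫ z, rΦ z ∂μ
      = ∫ z, ⟪z, gradient Φ z⟫ ∂μ - ∫ z, Φ z ∂μ - ∫ z, A (gradient Φ z) ∂μ := by
    have hs2 : Integrable (fun z : E => ⟪z, gradient Φ z⟫ - Φ z) μ := hinnerΦ.sub hΦint
    rw [hrΦdef]
    rw [integral_sub hs2 hAΦint, integral_sub hinnerΦ hΦint]
  have hAeq : ∫ x, A (gradient Ψ x) ∂μ = ∫ z, A (gradient Φ z) ∂μ := by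
    have h1 : ∫ x, A (gradient Ψ x) ∂μ = ∫ y, A y ∂ν := by
      rw [← hΨpush, integral_map mΨ.aemeasurable hAcont.aestronglyMeasurable]
    have h2 : ∫ z, A (gradient Φ z) ∂μ = ∫ y, A y ∂ν := by
      rw [← hΦpush, integral_map mΦ.aemeasurable hAcont.aestronglyMeasurable]
    rw [h1, h2]
  constructor
  · linarith
  · intro hrev
    have heq_r : ∫ x, rΨ x ∂μ = ∫ z, rΦ z ∂μ := le_antisymm hineq_r (by linarith)
    have e1 : ∫⁻ x, ENNReal.ofReal (rΨ x) ∂μ = ENNReal.ofReal (∫ z, rΦ z ∂μ) := by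
      refine le_antisymm step5 ?_
      rw [← heq_r]
      exact step6
    have e3 : (fun x => ENNReal.ofReal (rΨ x)) =ᵐ[μ] (fun x => ψ (gradient Ψ x)) := by
      refine ae_eq_of_ae_le_of_lintegral_le (ae_of_all _ hpt) ?_
        ((hψmeas.comp mΨ).aemeasurable) ?_
      · rw [e1]; exact ENNReal.ofReal_ne_top
      · rw [hIint, e1]
    have hrΨ0 : 0 ≤ ∫ x, rΨ x ∂μ := heq_r ▸ hrΦnonneg
    have e2 : 0 ≤ᵐ[μ] rΨ := by
      have hmax0 : 0 ≤ ∫ x, max (rΨ x) 0 ∂μ := integral_nonneg fun x => le_max_right _ _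
      have h1 : ∫ x, max (rΨ x) 0 ∂μ = ∫ x, rΨ x ∂μ := by
        have hh : ENNReal.ofReal (∫ x, max (rΨ x) 0 ∂μ) = ENNReal.ofReal (∫ x, rΨ x ∂μ) := by
          rw [← hmax, e1, ← heq_r]
        exact (ENNReal.ofReal_eq_ofReal_iff hmax0 hrΨ0).mp hh
      have h2 : ∫ x, (max (rΨ x) 0 - rΨ x) ∂μ = 0 := by
        rw [integral_sub hrΨint.pos_part hrΨint, h1, sub_self]
      have h3 := (integral_eq_zero_iff_of_nonneg_ae
        (ae_of_all _ fun x => sub_nonneg.mpr (le_max_left _ _))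
        (hrΨint.pos_part.sub hrΨint)).mp h2
      filter_upwards [h3] with x hx
      have hzero : max (rΨ x) 0 - rΨ x = 0 := hx
      simp only [Pi.zero_apply]
      have hmx : max (rΨ x) 0 = rΨ x := by linarith
      calc (0:ℝ) ≤ max (rΨ x) 0 := le_max_right _ _
        _ = rΨ x := hmx
    filter_upwards [e2, e3] with x hx0 hxe
    intro y
    have hy := hψ_ge y (gradient Ψ x)
    rw [← hxe] at hy
    have hreal : ⟪y, gradient Ψ x⟫ - Φ y - A (gradient Ψ x) ≤ rΨ x :=
      (ENNReal.ofReal_le_ofReal_iff hx0).mp hy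
    have hi : ⟪gradient Ψ x, y - x⟫ = ⟪y, gradient Ψ x⟫ - ⟪x, gradient Ψ x⟫ := inner_diff _ _ _
    simp only [hrΨdef] at hreal
    linarith


/-- Optimality: if `G` is a convex potential transporting `μ` to `ν`, and `Fₙ` are differentiable
convex potentials converging pointwise whose gradient pushforwards converge weakly to `ν`,
then `∇Fₙ → ∇G` μ-almost everywhere. -/
theorem gradient_tendsto_brenier_of_weak_convergence
    (d : ℕ) (μ ν : Measure (EuclideanSpace ℝ (Fin d)))
    [IsProbabilityMeasure μ] [IsProbabilityMeasure ν]
    (hμ2 : Integrable (fun x => ‖x‖ ^ 2) μ) (hν2 : Integrable (fun y => ‖y‖ ^ 2) ν)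
    (hac : μ ≪ volume)
    (G : EuclideanSpace ℝ (Fin d) → ℝ) (hGconv : ConvexOn ℝ univ G)
    (hGdiff : ∀ᵐ x ∂μ, DifferentiableAt ℝ G x)
    (hGpush : μ.map (fun x => gradient G x) = ν)
    (F : ℕ → EuclideanSpace ℝ (Fin d) → ℝ)
    (hFdiff : ∀ n, Differentiable ℝ (F n))
    (hFconv : ∀ n, ConvexOn ℝ univ (F n))
    (hptwise : ∀ x, ∃ l : ℝ, Tendsto (fun n => F n x) atTop (𝓝 l))
    (hweak : ∀ g : BoundedContinuousFunction (EuclideanSpace ℝ (Fin d)) ℝ,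
      Tendsto (fun n => ∫ x, g x ∂(μ.map (fun x => gradient (F n) x)))
        atTop (𝓝 (∫ y, g y ∂ν))) :
    ∀ᵐ x ∂μ, Tendsto (fun n => gradient (F n) x) atTop (𝓝 (gradient G x)) := by
  classical
  -- the pointwise limit
  set f : EuclideanSpace ℝ (Fin d) → ℝ := fun x => (hptwise x).choose with hfdef
  have hlim : ∀ x, Tendsto (fun n => F n x) atTop (𝓝 (f x)) := fun x => (hptwise x).choose_spec
  -- the limit is convex
  have hfconv : ConvexOn ℝ univ f := by
    refine ⟨convex_univ, fun x _ y _ a b ha hb hab => ?_⟩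
    have h1 : Tendsto (fun n => F n (a • x + b • y)) atTop (𝓝 (f (a • x + b • y))) :=
      hlim _
    have h2 : Tendsto (fun n => a * F n x + b * F n y) atTop (𝓝 (a * f x + b * f y)) :=
      ((hlim x).const_mul a).add ((hlim y).const_mul b)
    have h3 : ∀ n, F n (a • x + b • y) ≤ a * F n x + b * F n y := fun n => by
      simpa [smul_eq_mul] using (hFconv n).2 (mem_univ x) (mem_univ y) ha hb hab
    simpa [smul_eq_mul] using le_of_tendsto_of_tendsto' h1 h2 h3
  -- the limit is differentiable a.e.
  have hfdiff : ∀ᵐ x ∂μ, DifferentiableAt ℝ f x :=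
    (locallyLipschitz_ae_diff hfconv.locallyLipschitz).filter_mono hac.ae_le
  -- gradients converge a.e. to the gradient of the limit
  have htends : ∀ᵐ x ∂μ, Tendsto (fun n => gradient (F n) x) atTop (𝓝 (gradient f x)) := by
    filter_upwards [hfdiff] with x hx
    exact grad_tendsto_of_convex hFconv hFdiff hlim hx
  have mf : Measurable (fun x => gradient f x) := measurable_gradient f
  -- the pushforward of μ by ∇f is ν
  have hint : ∀ g : BoundedContinuousFunction (EuclideanSpace ℝ (Fin d)) ℝ,
      ∫ x, g (gradient f x) ∂μ = ∫ y, g y ∂ν := by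
    intro g
    have h1 : Tendsto (fun n => ∫ x, g (gradient (F n) x) ∂μ) atTop
        (𝓝 (∫ x, g (gradient f x) ∂μ)) := by
      apply tendsto_integral_of_dominated_convergence (fun _ => ‖g‖)
      · exact fun n =>
          (g.continuous.measurable.comp (measurable_gradient (F n))).aestronglyMeasurable
      · exact integrable_const _
      · intro n; filter_upwards with x; exact g.norm_coe_le_norm _
      · filter_upwards [htends] with x hx; exact (g.continuous.tendsto _).comp hx
    have h2 : Tendsto (fun n => ∫ x, g (gradient (F n) x) ∂μ) atTop (𝓝 (∫ y, g y ∂ν)) := by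
      refine Tendsto.congr (fun n => ?_) (hweak g)
      exact integral_map (measurable_gradient (F n)).aemeasurable
        g.continuous.aestronglyMeasurable
    exact tendsto_nhds_unique h1 h2
  have hfpush : μ.map (fun x => gradient f x) = ν := by
    haveI : IsProbabilityMeasure (μ.map (fun x => gradient f x)) :=
      Measure.isProbabilityMeasure_map mf.aemeasurable
    apply MeasureTheory.ext_of_forall_lintegral_eq_of_IsFiniteMeasure
    intro f₀
    set g : BoundedContinuousFunction (EuclideanSpace ℝ (Fin d)) ℝ :=
      BoundedContinuousFunction.comp _ (isometry_subtype_coe).lipschitz f₀ with hgdef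
    have hgfun : ⇑g = fun y => ((f₀ y : ℝ)) := rfl
    have e1 : ∫⁻ y, (f₀ y : ℝ≥0∞) ∂(μ.map (fun x => gradient f x))
        = ENNReal.ofReal (∫ y, (f₀ y : ℝ) ∂(μ.map (fun x => gradient f x))) :=
      MeasureTheory.lintegral_coe_eq_integral _
        (by exact BoundedContinuousFunction.integrable_of_nnreal _ f₀)
    have e2 : ∫⁻ y, (f₀ y : ℝ≥0∞) ∂ν = ENNReal.ofReal (∫ y, (f₀ y : ℝ) ∂ν) :=
      MeasureTheory.lintegral_coe_eq_integral _
        (by exact BoundedContinuousFunction.integrable_of_nnreal _ f₀)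
    rw [e1, e2]
    congr 1
    have hms : AEStronglyMeasurable (fun y : EuclideanSpace ℝ (Fin d) => (f₀ y : ℝ))
        (μ.map (fun x => gradient f x)) :=
      (NNReal.continuous_coe.comp f₀.continuous).aestronglyMeasurable
    rw [integral_map mf.aemeasurable hms]
    have hg := hint g
    rw [hgfun] at hg
    exact hg
  -- apply the transport comparison in both directions
  have h1 := main_transport hμ2 hν2 G f hGconv hGdiff hGpush hfpush
  have h2 := main_transport hμ2 hν2 f G hfconv hfdiff hfpush hGpush
  have hsub := h1.2 h2.1
  filter_upwards [htends, hGdiff, hsub] with x hx hGx hsubx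
  have hgeq : gradient f x = gradient G x := by
    apply subgrad_unique hGx.hasGradientAt
    intro y
    have := hsubx y
    linarith
  rw [← hgeq]
  exact hx
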